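/- Let G be a finite simple graph with maximum degree Δ(G) = 5, and suppose every proper subgraph H of G satisfies χ_i(H) ≤ 7. If G contains a vertex of degree 3 that is adjacent to one vertex of degree 2 and to two other vertices u and v with d(u) + d(v) ≤ 7, then χ_i(G) ≤ 7. -/

import Mathlib

open SimpleGraph

/-- An injective coloring of `G`: any two distinct vertices with a common neighbor
receive distinct colors. -/
def IsInjColoring {V α : Type*} (G : SimpleGraph V) (c : V → α) : Prop :=
  ∀ ⦃u v : V⦄, u ≠ v → (∃ w, G.Adj u w ∧ G.Adj v w) → c u ≠ c v

/-- The injective chromatic number of `G`: the least `k` such that `G` has an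
injective coloring with `k` colors. -/
noncomputable def injChromNum {V : Type*} (G : SimpleGraph V) : ℕ :=
  sInf {k | ∃ c : V → Fin k, IsInjColoring G c}

lemma exists_fresh_color {V : Type*} [DecidableEq V] (f : V → Fin 7) (S : Finset V)
    (hS : S.card ≤ 6) : ∃ a : Fin 7, ∀ x ∈ S, f x ≠ a := by
  classical
  by_contra hcon
  push_neg at hcon
  have hsub : (Finset.univ : Finset (Fin 7)) ⊆ S.image f := by
    intro a _
    obtain ⟨x, hx, he⟩ := hcon a
    exact Finset.mem_image.2 ⟨x, hx, he⟩
  have h1 := Finset.card_le_card hsub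
  have h2 := Finset.card_image_le (s := S) (f := f)
  simp [Finset.card_univ] at h1
  omega

/-- (RC4 for `Δ = 5`.)  Suppose `Δ(G) = 5` and every proper subgraph `H` of `G`
satisfies `χᵢ(H) ≤ 7`.  If `G` has a `3`-vertex adjacent to one `2`-vertex and to
two other vertices `u, v` with `d(u) + d(v) ≤ 7`, then `χᵢ(G) ≤ 7`. -/
theorem rc4_maxDegree_five {V : Type*} [Fintype V] (G : SimpleGraph V)
    [DecidableRel G.Adj] (hΔ : G.maxDegree = 5)
    (hmin : ∀ H : G.Subgraph, H ≠ ⊤ → injChromNum H.coe ≤ 7)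
    (h : ∃ w z u v : V, G.degree w = 3 ∧ G.Adj w z ∧ G.Adj w u ∧ G.Adj w v ∧
      z ≠ u ∧ z ≠ v ∧ u ≠ v ∧ G.degree z = 2 ∧ G.degree u + G.degree v ≤ 7) :
    injChromNum G ≤ 7 := by
  classical
  obtain ⟨w, z, u, v, hdw, hwz, hwu, hwv, hzu, hzv, huv, hdz, hduv⟩ := h
  -- The subgraph H = G minus the edge wz
  let H : G.Subgraph :=
    { verts := Set.univ
      Adj := fun a b => G.Adj a b ∧ ¬((a = w ∧ b = z) ∨ (a = z ∧ b = w))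
      adj_sub := fun h => h.1
      edge_vert := fun _ => Set.mem_univ _
      symm := by
        constructor
        intro a b hab
        exact ⟨hab.1.symm, by have := hab.2; tauto⟩ }
  have hHne : H ≠ ⊤ := by
    intro he
    have htop : H.Adj w z := by
      rw [he]
      exact (SimpleGraph.Subgraph.top_adj).2 hwz
    exact htop.2 (Or.inl ⟨rfl, rfl⟩)
  -- extract a 7-coloring of H
  have hself : Fintype.card V ∈ {k | ∃ c : ↥H.verts → Fin k, IsInjColoring H.coe c} := by
    refine ⟨fun x => (Fintype.equivFin V) x.val, ?_⟩
    intro a b hab _ he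
    exact hab (Subtype.ext ((Fintype.equivFin V).injective he))
  have hne : {k | ∃ c : ↥H.verts → Fin k, IsInjColoring H.coe c}.Nonempty :=
    ⟨_, hself⟩
  have hmem : injChromNum H.coe ∈ {k | ∃ c : ↥H.verts → Fin k, IsInjColoring H.coe c} :=
    Nat.sInf_mem hne
  have hle : injChromNum H.coe ≤ 7 := hmin H hHne
  obtain ⟨c, hc⟩ := hmem
  let c0 : V → Fin 7 := fun x => Fin.castLE hle (c ⟨x, Set.mem_univ x⟩)
  have hc0 : ∀ ⦃x y : V⦄, x ≠ y → (∃ t, H.Adj x t ∧ H.Adj y t) → c0 x ≠ c0 y := by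
    rintro x y hxy ⟨t, hxt, hyt⟩ he
    have h1 : H.coe.Adj ⟨x, Set.mem_univ x⟩ ⟨t, Set.mem_univ t⟩ := hxt
    have h2 : H.coe.Adj ⟨y, Set.mem_univ y⟩ ⟨t, Set.mem_univ t⟩ := hyt
    have hne' : (⟨x, Set.mem_univ x⟩ : ↥H.verts) ≠ ⟨y, Set.mem_univ y⟩ :=
      fun hh => hxy (congrArg Subtype.val hh)
    exact hc hne' ⟨⟨t, Set.mem_univ t⟩, h1, h2⟩ (Fin.castLE_injective hle he)
  -- basic degree facts
  have hwz' : w ≠ z := hwz.ne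
  have hzw' : z ≠ w := hwz.ne.symm
  -- N(w) = {z, u, v}
  have hNw : G.neighborFinset w = {z, u, v} := by
    have hsub : ({z, u, v} : Finset V) ⊆ G.neighborFinset w := by
      intro x hx
      simp only [Finset.mem_insert, Finset.mem_singleton] at hx
      rw [SimpleGraph.mem_neighborFinset]
      rcases hx with rfl | rfl | rfl
      · exact hwz
      · exact hwu
      · exact hwv
    have hcard : ({z, u, v} : Finset V).card = 3 := by
      rw [Finset.card_insert_of_notMem (by simp [hzu, hzv]),
        Finset.card_insert_of_notMem (by simp [huv]), Finset.card_singleton]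
    have hdw' : (G.neighborFinset w).card = 3 := by
      rw [SimpleGraph.card_neighborFinset_eq_degree]; exact hdw
    exact (Finset.eq_of_subset_of_card_le hsub (by omega)).symm
  -- The second neighbor z1 of z
  have hwNz : w ∈ G.neighborFinset z := by
    rw [SimpleGraph.mem_neighborFinset]; exact hwz.symm
  have hdz' : (G.neighborFinset z).card = 2 := by
    rw [SimpleGraph.card_neighborFinset_eq_degree]; exact hdz
  have hcard1 : ((G.neighborFinset z).erase w).card = 1 := by
    rw [Finset.card_erase_of_mem hwNz, hdz']
  obtain ⟨z1, hz1⟩ := Finset.card_eq_one.1 hcard1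
  have hz1Nz : z1 ∈ G.neighborFinset z := by
    have : z1 ∈ (G.neighborFinset z).erase w := by rw [hz1]; exact Finset.mem_singleton_self z1
    exact Finset.mem_of_mem_erase this
  have hNz : G.neighborFinset z = {w, z1} := by
    have := Finset.insert_erase hwNz
    rw [hz1] at this
    exact this.symm
  have hzz1 : G.Adj z z1 := (SimpleGraph.mem_neighborFinset _ _ _).1 hz1Nz
  have hzNz1 : z ∈ G.neighborFinset z1 := by
    rw [SimpleGraph.mem_neighborFinset]; exact hzz1.symm
  -- pick a color for z
  have hdz1 : (G.neighborFinset z1).card ≤ 5 := by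
    rw [SimpleGraph.card_neighborFinset_eq_degree]
    rw [← hΔ]; exact G.degree_le_maxDegree z1
  set Sz : Finset V := ({u, v} : Finset V) ∪ (G.neighborFinset z1).erase z with hSz
  have hSzcard : Sz.card ≤ 6 := by
    rw [hSz]
    have h1 := Finset.card_union_le ({u, v} : Finset V) ((G.neighborFinset z1).erase z)
    have h2 : ({u, v} : Finset V).card ≤ 2 := by
      exact le_trans (Finset.card_insert_le _ _) (by simp)
    have h3 : ((G.neighborFinset z1).erase z).card ≤ 4 := by
      rw [Finset.card_erase_of_mem hzNz1]; omega
    omega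
  obtain ⟨a, ha⟩ := exists_fresh_color c0 Sz hSzcard
  set c1 : V → Fin 7 := Function.update c0 z a with hc1def
  -- pick a color for w
  have hwNu : w ∈ G.neighborFinset u := by
    rw [SimpleGraph.mem_neighborFinset]; exact hwu.symm
  have hwNv : w ∈ G.neighborFinset v := by
    rw [SimpleGraph.mem_neighborFinset]; exact hwv.symm
  set T : Finset V := ((G.neighborFinset z).erase w) ∪
      (((G.neighborFinset u).erase w) ∪ ((G.neighborFinset v).erase w)) with hT
  have hTcard : T.card ≤ 6 := by
    rw [hT]
    have h1 := Finset.card_union_le ((G.neighborFinset z).erase w)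
      (((G.neighborFinset u).erase w) ∪ ((G.neighborFinset v).erase w))
    have h2 := Finset.card_union_le ((G.neighborFinset u).erase w) ((G.neighborFinset v).erase w)
    have h3 : ((G.neighborFinset u).erase w).card = G.degree u - 1 := by
      rw [Finset.card_erase_of_mem hwNu, SimpleGraph.card_neighborFinset_eq_degree]
    have h4 : ((G.neighborFinset v).erase w).card = G.degree v - 1 := by
      rw [Finset.card_erase_of_mem hwNv, SimpleGraph.card_neighborFinset_eq_degree]
    have h5 : 1 ≤ G.degree u := by
      rw [← SimpleGraph.card_neighborFinset_eq_degree]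
      exact Finset.card_pos.2 ⟨w, hwNu⟩
    have h6 : 1 ≤ G.degree v := by
      rw [← SimpleGraph.card_neighborFinset_eq_degree]
      exact Finset.card_pos.2 ⟨w, hwNv⟩
    omega
  obtain ⟨b, hb⟩ := exists_fresh_color c1 T hTcard
  set c2 : V → Fin 7 := Function.update c1 w b with hc2def
  -- c2 is an injective coloring of G
  have hinj : IsInjColoring G c2 := by
    rintro x y hxy ⟨t, hxt, hyt⟩
    -- helper: any vertex ≠ w sharing a common neighbor with w lies in T
    have hmemT : ∀ s p : V, G.Adj w p → G.Adj s p → s ≠ w → s ∈ T := by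
      intro s p hwp hsp hsw
      have hpNw : p ∈ G.neighborFinset w := (SimpleGraph.mem_neighborFinset _ _ _).2 hwp
      rw [hNw] at hpNw
      simp only [Finset.mem_insert, Finset.mem_singleton] at hpNw
      rw [hT]
      rcases hpNw with hp | hp | hp <;> rw [hp] at hsp
      · exact Finset.mem_union_left _ (Finset.mem_erase.2 ⟨hsw,
          (SimpleGraph.mem_neighborFinset _ _ _).2 hsp.symm⟩)
      · exact Finset.mem_union_right _ (Finset.mem_union_left _ (Finset.mem_erase.2 ⟨hsw,
          (SimpleGraph.mem_neighborFinset _ _ _).2 hsp.symm⟩))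
      · exact Finset.mem_union_right _ (Finset.mem_union_right _ (Finset.mem_erase.2 ⟨hsw,
          (SimpleGraph.mem_neighborFinset _ _ _).2 hsp.symm⟩))
    -- helper: any vertex ∉ {w, z} sharing a common neighbor with z lies in Sz
    have hmemSz : ∀ s p : V, G.Adj z p → G.Adj s p → s ≠ w → s ≠ z → s ∈ Sz := by
      intro s p hzp hsp hsw hsz
      have hpNz : p ∈ G.neighborFinset z := (SimpleGraph.mem_neighborFinset _ _ _).2 hzp
      rw [hNz] at hpNz
      simp only [Finset.mem_insert, Finset.mem_singleton] at hpNz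
      rw [hSz]
      rcases hpNz with hp | hp <;> rw [hp] at hsp
      · -- p = w, so s ∈ N(w) \ {z} = {u, v}
        have hsNw : s ∈ G.neighborFinset w := (SimpleGraph.mem_neighborFinset _ _ _).2 hsp.symm
        rw [hNw] at hsNw
        simp only [Finset.mem_insert, Finset.mem_singleton] at hsNw
        rcases hsNw with hs | hs | hs
        · exact absurd hs hsz
        · exact Finset.mem_union_left _ (by simp [hs])
        · exact Finset.mem_union_left _ (by simp [hs])
      · exact Finset.mem_union_right _ (Finset.mem_erase.2 ⟨hsz,
          (SimpleGraph.mem_neighborFinset _ _ _).2 hsp.symm⟩)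
    by_cases hxw : x = w
    · subst hxw
      have hyw : y ≠ x := hxy.symm
      have hyT : y ∈ T := hmemT y t hxt hyt hyw
      have e1 : c2 x = b := Function.update_self _ _ _
      have e2 : c2 y = c1 y := Function.update_of_ne hyw _ _
      rw [e1, e2]
      exact fun he => hb y hyT he.symm
    · by_cases hyw : y = w
      · subst hyw
        have hxT : x ∈ T := hmemT x t hyt hxt hxw
        have e1 : c2 y = b := Function.update_self _ _ _
        have e2 : c2 x = c1 x := Function.update_of_ne hxw _ _
        rw [e1, e2]
        exact hb x hxT
      · by_cases hxz : x = z
        · subst hxz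
          have hyz : y ≠ x := hxy.symm
          have hySz : y ∈ Sz := hmemSz y t hxt hyt hyw hyz
          have e1 : c2 x = a := by
            rw [hc2def, Function.update_of_ne hxw, hc1def, Function.update_self]
          have e2 : c2 y = c0 y := by
            rw [hc2def, Function.update_of_ne hyw, hc1def, Function.update_of_ne hyz]
          rw [e1, e2]
          exact fun he => ha y hySz he.symm
        · by_cases hyz : y = z
          · subst hyz
            have hxSz : x ∈ Sz := hmemSz x t hyt hxt hxw hxz
            have e1 : c2 y = a := by
              rw [hc2def, Function.update_of_ne hyw, hc1def, Function.update_self]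
            have e2 : c2 x = c0 x := by
              rw [hc2def, Function.update_of_ne hxw, hc1def, Function.update_of_ne hxz]
            rw [e1, e2]
            exact ha x hxSz
          · -- both x and y away from w, z: use the coloring of H
            have e1 : c2 x = c0 x := by
              rw [hc2def, Function.update_of_ne hxw, hc1def, Function.update_of_ne hxz]
            have e2 : c2 y = c0 y := by
              rw [hc2def, Function.update_of_ne hyw, hc1def, Function.update_of_ne hyz]
            rw [e1, e2]
            refine hc0 hxy ⟨t, ⟨hxt, ?_⟩, ⟨hyt, ?_⟩⟩
            · rintro (⟨rfl, rfl⟩ | ⟨rfl, rfl⟩)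
              · exact hxw rfl
              · exact hxz rfl
            · rintro (⟨rfl, rfl⟩ | ⟨rfl, rfl⟩)
              · exact hyw rfl
              · exact hyz rfl
  exact Nat.sInf_le ⟨c2, hinj⟩
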